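/- Fix integers l ≥ 0, t with 0 ≤ t ≤ l, and s > l − t. Define C(s,k) = ∑_{i=max(0, l−s−k)}^{min(t, l−k)} a_{t,i}(q) q^{(k−i)(i−l+s+k)} [l−k choose i]_q [t−l+s+k choose t−i]_q, where a_{t,i}(q) = ∏_{0 ≤ j ≤ i−1} q^{l−t+1}/(q^{2(l−j)} − 1). Then C satisfies the recursion C(s+1, k) = (1/[s+1]) ( q^{2k−l} [t+s−l+k+1] C(s,k) + [l−k] C(s, k+1) ). -/

import Mathlib

noncomputable section

/-- The field `ℚ(q)` of rational functions. -/
abbrev K : Type := RatFunc ℚ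

/-- The indeterminate `q`. -/
def q : K := RatFunc.X

/-- The balanced quantum integer `[k] = (q^k - q^{-k})/(q - q⁻¹)`. -/
def qint (k : ℤ) : K := (q ^ k - q ^ (-k)) / (q - q⁻¹)

/-- The quantum factorial `[k]! = [1][2]⋯[k]`. -/
def qfact : ℕ → K
  | 0 => 1
  | k + 1 => qfact k * qint ((k : ℤ) + 1)

/-- The Gaussian binomial coefficient `[c choose d] = [c]!/([c-d]![d]!)` for `c ≥ d ≥ 0`,
and `0` otherwise. -/
def qbinom (c d : ℤ) : K :=
  if d ≤ c ∧ 0 ≤ d then qfact c.toNat / (qfact (c - d).toNat * qfact d.toNat) else 0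

/-- The coefficient `a_{t,i}(q) = ∏_{0 ≤ j ≤ i−1} q^{l−t+1}/(q^{2(l−j)} − 1)`,
with `a_{t,0} = 1`. -/
def att (l t i : ℕ) : K :=
  ∏ j ∈ Finset.range i, q ^ ((l : ℤ) - t + 1) / (q ^ (2 * ((l : ℤ) - j)) - 1)

/-- `C(s,k) = ∑_{i=max(0,l−s−k)}^{min(t,l−k)} a_{t,i}(q) q^{(k−i)(i−l+s+k)}
[l−k choose i] [t−l+s+k choose t−i]`. -/
def Cfun (l t s k : ℕ) : K :=
  ∑ i ∈ Finset.Icc (max 0 ((l : ℤ) - s - k)) (min (t : ℤ) ((l : ℤ) - k)),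
    att l t i.toNat * q ^ (((k : ℤ) - i) * (i - l + s + k)) *
      qbinom ((l : ℤ) - k) i * qbinom ((t : ℤ) - l + s + k) ((t : ℤ) - i)

lemma hq0 : q ≠ 0 := RatFunc.X_ne_zero

lemma hqpow (n : ℤ) (hn : n ≠ 0) : q ^ n ≠ 1 := by
  intro h
  wlog hpos : 0 < n generalizing n
  · exact this (-n) (by omega) (by rw [zpow_neg, h, inv_one]) (by omega)
  · have h1 : ((RatFunc.X : RatFunc ℚ)) ^ n.toNat = 1 := by
      rw [← zpow_natCast, Int.toNat_of_nonneg hpos.le]; exact h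
    have h2 : (algebraMap (Polynomial ℚ) (RatFunc ℚ)) (Polynomial.X ^ n.toNat) = algebraMap _ _ 1 := by
      simpa using h1
    have h3 := RatFunc.algebraMap_injective ℚ h2
    have := congrArg Polynomial.natDegree h3
    simp [Polynomial.natDegree_X_pow] at this
    omega

lemma hqd : q - q⁻¹ ≠ 0 := by
  intro h
  have hq : q = q⁻¹ := by linear_combination h
  have : q ^ (2:ℤ) = 1 := by
    calc q ^ (2:ℤ) = q * q := by rw [zpow_two]
    _ = 1 := by nth_rewrite 2 [hq]; rw [mul_inv_cancel₀ hq0]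
  exact hqpow 2 (by norm_num) this

lemma qnum_ne (n : ℤ) (hn : n ≠ 0) : q ^ n - q ^ (-n) ≠ 0 := by
  intro h
  apply hqpow (2*n) (by omega)
  have h' : q ^ n = q ^ (-n) := by linear_combination h
  calc q ^ (2*n) = q ^ n * q ^ n := by rw [two_mul, zpow_add₀ hq0]
  _ = q ^ n * q ^ (-n) := by rw [← h']
  _ = 1 := by rw [← zpow_add₀ hq0]; simp

lemma qint_ne (n : ℤ) (hn : n ≠ 0) : qint n ≠ 0 :=
  div_ne_zero (qnum_ne n hn) hqd

lemma qint_zero : qint 0 = 0 := by simp [qint]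

lemma qfact_ne (n : ℕ) : qfact n ≠ 0 := by
  induction n with
  | zero => simp [qfact]
  | succ k ih => exact mul_ne_zero ih (qint_ne _ (by omega))

lemma qfact_succ_int (n : ℤ) (hn : 1 ≤ n) : qfact n.toNat = qfact (n-1).toNat * qint n := by
  have h : n.toNat = (n-1).toNat + 1 := by omega
  rw [h]
  show qfact _ * qint _ = _
  congr 1
  congr 1
  omega

lemma pascal (n j : ℤ) : qint n * qbinom (n-1) j = qint (n-j) * qbinom n j := by
  unfold qbinom
  by_cases hj : 0 ≤ j
  · by_cases hle : j ≤ n - 1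
    · rw [if_pos ⟨hle, hj⟩, if_pos ⟨by omega, hj⟩]
      have hn1 : 1 ≤ n := by omega
      have hnj : 1 ≤ n - j := by omega
      rw [qfact_succ_int n hn1, qfact_succ_int (n-j) hnj]
      have harg : (n - 1 - j).toNat = (n - j - 1).toNat := by omega
      rw [harg]
      simp only [← mul_div_assoc]
      rw [div_eq_div_iff (mul_ne_zero (qfact_ne _) (qfact_ne _))
        (mul_ne_zero (mul_ne_zero (qfact_ne _) (qint_ne _ (by omega))) (qfact_ne _))]
      ring
    · rw [if_neg (by omega)]
      by_cases hn : j ≤ n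
      · have : j = n := by omega
        rw [if_pos ⟨hn, hj⟩, this, sub_self, qint_zero, zero_mul, mul_zero]
      · rw [if_neg (by omega), mul_zero, mul_zero]
  · rw [if_neg (by omega), if_neg (by omega), mul_zero, mul_zero]

lemma scalarId (s k l i : ℤ) :
    q ^ (k - i) * qint (s + 1)
      = q ^ (2*k - l) * qint (s + k - l + i + 1) + q ^ (s + 2*k - l + 1) * qint (l - k - i) := by
  unfold qint
  simp only [← mul_div_assoc]
  rw [← add_div]
  congr 1
  simp only [mul_sub, ← zpow_add₀ hq0]
  ring_nf

lemma qbinom_eq_zero_left (c d : ℤ) (h : c < d) : qbinom c d = 0 := by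
  unfold qbinom; rw [if_neg (by omega)]

lemma qbinom_eq_zero_right (c d : ℤ) (h : d < 0) : qbinom c d = 0 := by
  unfold qbinom; rw [if_neg (by omega)]

lemma Cfun_eq (l t s k : ℕ) :
    Cfun l t s k = ∑ i ∈ Finset.Icc (0:ℤ) (t:ℤ),
      att l t i.toNat * q ^ (((k : ℤ) - i) * (i - l + s + k)) *
        qbinom ((l : ℤ) - k) i * qbinom ((t : ℤ) - l + s + k) ((t : ℤ) - i) := by
  unfold Cfun
  apply Finset.sum_subset
  · intro i hi
    simp only [Finset.mem_Icc] at *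
    omega
  · intro i hi hni
    simp only [Finset.mem_Icc] at hi hni
    rcases (by omega : i < (l:ℤ) - s - k ∨ (l:ℤ) - k < i) with h | h
    · rw [qbinom_eq_zero_left ((t:ℤ) - l + s + k) ((t:ℤ) - i) (by omega), mul_zero]
    · rw [qbinom_eq_zero_left ((l:ℤ) - k) i (by omega), mul_zero, zero_mul]

/-- The recursion
`C(s+1,k) = (1/[s+1]) ( q^{2k−l} [t+s−l+k+1] C(s,k) + [l−k] C(s,k+1) )`,
for `0 ≤ t ≤ l` and `s > l − t`. -/
theorem Cfun_recursion (l t s : ℕ) (ht : t ≤ l) (hs : (l : ℤ) - t < s) (k : ℕ) :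
    Cfun l t (s + 1) k
      = (qint ((s : ℤ) + 1))⁻¹ *
          (q ^ (2 * (k : ℤ) - l) * qint ((t : ℤ) + s - l + k + 1) * Cfun l t s k
            + qint ((l : ℤ) - k) * Cfun l t s (k + 1)) := by
  have hs1 : qint ((s:ℤ)+1) ≠ 0 := qint_ne _ (by omega)
  rw [inv_mul_eq_div, eq_div_iff hs1]
  rw [Cfun_eq l t (s+1) k, Cfun_eq l t s k, Cfun_eq l t s (k+1)]
  rw [Finset.sum_mul, Finset.mul_sum, Finset.mul_sum, ← Finset.sum_add_distrib]
  apply Finset.sum_congr rfl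
  intro i hi
  rw [Finset.mem_Icc] at hi
  push_cast
  rw [show ((k:ℤ) - i) * (i - ↑l + (↑s + 1) + ↑k)
        = ((k:ℤ) - i) * (i - ↑l + ↑s + ↑k) + (↑k - i) by ring,
      show ((k:ℤ) + 1 - i) * (i - ↑l + ↑s + (↑k + 1))
        = ((k:ℤ) - i) * (i - ↑l + ↑s + ↑k) + (↑s + 2*↑k - ↑l + 1) by ring,
      zpow_add₀ hq0, zpow_add₀ hq0,
      show (t:ℤ) - ↑l + (↑s + 1) + ↑k = (t:ℤ) - ↑l + ↑s + ↑k + 1 by ring,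
      show (t:ℤ) + ↑s - ↑l + ↑k + 1 = (t:ℤ) - ↑l + ↑s + ↑k + 1 by ring,
      show (l:ℤ) - (↑k + 1) = (l:ℤ) - ↑k - 1 by ring,
      show (t:ℤ) - ↑l + ↑s + (↑k + 1) = (t:ℤ) - ↑l + ↑s + ↑k + 1 by ring]
  have hp1 := pascal ((t:ℤ) - ↑l + ↑s + ↑k + 1) ((t:ℤ) - i)
  rw [show (t:ℤ) - ↑l + ↑s + ↑k + 1 - 1 = (t:ℤ) - ↑l + ↑s + ↑k by ring,
      show (t:ℤ) - ↑l + ↑s + ↑k + 1 - (↑t - i) = (s:ℤ) + ↑k - ↑l + i + 1 by ring] at hp1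
  have hp2 := pascal ((l:ℤ) - ↑k) i
  have hsc := scalarId (s:ℤ) (k:ℤ) (l:ℤ) i
  linear_combination
    (att l t i.toNat * q ^ (((k:ℤ) - i) * (i - ↑l + ↑s + ↑k)) * qbinom ((l:ℤ) - ↑k) i
      * qbinom ((t:ℤ) - ↑l + ↑s + ↑k + 1) (↑t - i)) * hsc
    - (q ^ (2*(k:ℤ) - ↑l) * att l t i.toNat * q ^ (((k:ℤ) - i) * (i - ↑l + ↑s + ↑k))
      * qbinom ((l:ℤ) - ↑k) i) * hp1
    - (att l t i.toNat * q ^ (((k:ℤ) - i) * (i - ↑l + ↑s + ↑k)) * q ^ ((s:ℤ) + 2*↑k - ↑l + 1)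
      * qbinom ((t:ℤ) - ↑l + ↑s + ↑k + 1) (↑t - i)) * hp2

end
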